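/- The sequential privacy mechanism is faithful and private, and its rate satisfies 1 − (1/n)∑_{i=1}^{n} P(Y_i = ∗) = (1/n) ∑_{i=1}^{n} ∑_{a∈𝒳} ∑_{y_{[i−1]}} P(Y_{[i−1]} = y_{[i−1]}) · min_{u} P(X_i = a | X_K = u, Y_{[i−1]} = y_{[i−1]}), where the inner sum is over histories y_{[i−1]} occurring with positive probability and the minimum is over u ∈ 𝒳^{|K|} with P(X_K = u, Y_{[i−1]} = y_{[i−1]}) > 0. Consequently, every rate R not exceeding this quantity is achievable. -/

import Mathlib

open Finset
open scoped Classical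

noncomputable section

namespace GenotypeHiding

variable {X : Type} [Fintype X] [DecidableEq X]

/-- Restriction of a sequence `x` to the sensitive positions `K`. -/
def restr {n : ℕ} (K : Finset (Fin n)) (x : Fin n → X) : ↥K → X := fun i => x (i : Fin n)

/-- `y` agrees with the history `h` on all coordinates `j` with `j < t`
(i.e. the event `Y_{[t]} = h_{[t]}`, zero-based). -/
def agreeN {n : ℕ} (t : ℕ) (y h : Fin n → Option X) : Prop :=
  ∀ j : Fin n, (j : ℕ) < t → y j = h j

/-- `P(X = x, Y_{[t]} = h_{[t]})` under the joint law `J` of `(X, Y)`. -/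
def prXH {n : ℕ} (J : (Fin n → X) → (Fin n → Option X) → ℝ) (t : ℕ)
    (x : Fin n → X) (h : Fin n → Option X) : ℝ :=
  ∑ y : Fin n → Option X, if agreeN t y h then J x y else 0

/-- `P(Y_i = b, X = x, Y_{[t]} = h_{[t]})` under the joint law `J`. -/
def prXHY {n : ℕ} (J : (Fin n → X) → (Fin n → Option X) → ℝ) (t : ℕ)
    (x : Fin n → X) (h : Fin n → Option X) (i : Fin n) (b : Option X) : ℝ :=
  ∑ y : Fin n → Option X, if y i = b ∧ agreeN t y h then J x y else 0

/-- `P(Y_{[t]} = h_{[t]})` under the joint law `J`. -/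
def prH {n : ℕ} (J : (Fin n → X) → (Fin n → Option X) → ℝ) (t : ℕ)
    (h : Fin n → Option X) : ℝ :=
  ∑ x : Fin n → X, prXH J t x h

/-- `P(X_K = u, Y_{[t]} = h_{[t]})` under the joint law `J`. -/
def prKH {n : ℕ} (J : (Fin n → X) → (Fin n → Option X) → ℝ) (K : Finset (Fin n))
    (t : ℕ) (u : ↥K → X) (h : Fin n → Option X) : ℝ :=
  ∑ x : Fin n → X, ∑ y : Fin n → Option X,
    if restr K x = u ∧ agreeN t y h then J x y else 0

/-- `P(X_i = a, X_K = u, Y_{[t]} = h_{[t]})` under the joint law `J`. -/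
def prIKH {n : ℕ} (J : (Fin n → X) → (Fin n → Option X) → ℝ) (K : Finset (Fin n))
    (t : ℕ) (i : Fin n) (a : X) (u : ↥K → X) (h : Fin n → Option X) : ℝ :=
  ∑ x : Fin n → X, ∑ y : Fin n → Option X,
    if x i = a ∧ restr K x = u ∧ agreeN t y h then J x y else 0

/-- `P(Y_i = b, X_K = u, Y_{[t]} = h_{[t]})` under the joint law `J`. -/
def prYKH {n : ℕ} (J : (Fin n → X) → (Fin n → Option X) → ℝ) (K : Finset (Fin n))
    (t : ℕ) (i : Fin n) (b : Option X) (u : ↥K → X) (h : Fin n → Option X) : ℝ :=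
  ∑ x : Fin n → X, ∑ y : Fin n → Option X,
    if y i = b ∧ restr K x = u ∧ agreeN t y h then J x y else 0

/-- `P(X_i = a | X_K = u, Y_{[t]} = h_{[t]})` under the joint law `J`. -/
def condX {n : ℕ} (J : (Fin n → X) → (Fin n → Option X) → ℝ) (K : Finset (Fin n))
    (t : ℕ) (i : Fin n) (a : X) (u : ↥K → X) (h : Fin n → Option X) : ℝ :=
  prIKH J K t i a u h / prKH J K t u h

/-- `min_u P(X_i = a | X_K = u, Y_{[t]} = h_{[t]})`, the minimum being over all `u` with
`P(X_K = u, Y_{[t]} = h_{[t]}) > 0`. -/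
def minC {n : ℕ} (J : (Fin n → X) → (Fin n → Option X) → ℝ) (K : Finset (Fin n))
    (t : ℕ) (i : Fin n) (a : X) (h : Fin n → Option X) : ℝ :=
  sInf {r : ℝ | ∃ u : ↥K → X, 0 < prKH J K t u h ∧ r = condX J K t i a u h}

/-- `J` is the joint law of `(X, Y)` where `Y` is generated from `X ∼ p` by the sequential
privacy mechanism: `Y_i ∈ {X_i, ∗}`, and conditionally on `X = x` and the previously
generated outputs `Y_{[i-1]} = y_{[i-1]}`, the mechanism releases `Y_i = x_i` with
probability `min_u P(X_i = x_i | X_K = u, Y_{[i-1]}) / P(X_i = x_i | X_K = x_K, Y_{[i-1]})`,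
and erases (`Y_i = ∗`) with the complementary probability. -/
def IsSequentialMechanism {n : ℕ} (p : (Fin n → X) → ℝ) (K : Finset (Fin n))
    (J : (Fin n → X) → (Fin n → Option X) → ℝ) : Prop :=
  (∀ x y, 0 ≤ J x y) ∧
  (∀ x, ∑ y : Fin n → Option X, J x y = p x) ∧
  (∀ x y, 0 < J x y → ∀ i : Fin n, y i = some (x i) ∨ y i = none) ∧
  (∀ (i : Fin n) (x : Fin n → X) (h : Fin n → Option X), 0 < prXH J (i : ℕ) x h →
    prXHY J (i : ℕ) x h i (some (x i))
      = (minC J K (i : ℕ) i (x i) h / condX J K (i : ℕ) i (x i) (restr K x) h)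
          * prXH J (i : ℕ) x h)


/-- Number of erasures `e(y) = #{i : y_i = ∗}` in an output sequence. -/
def numErasures {n : ℕ} (y : Fin n → Option X) : ℕ :=
  (Finset.univ.filter (fun i : Fin n => y i = none)).card


/-! ### Auxiliary lemmas -/

set_option linter.unusedSectionVars false

section Aux

variable {n : ℕ}

/-- Truncation of an output sequence to its first `t` coordinates. -/
def pad (t : ℕ) (y : Fin n → Option X) : Fin n → Option X :=
  fun j => if (j : ℕ) < t then y j else none

lemma pad_pad (t : ℕ) (y : Fin n → Option X) : pad t (pad t y) = pad t y := by
  funext j; by_cases hj : (j : ℕ) < t <;> simp [pad, hj]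

lemma agreeN_iff_pad (t : ℕ) (y h : Fin n → Option X) :
    agreeN t y h ↔ pad t y = pad t h := by
  constructor
  · intro H; funext j; by_cases hj : (j : ℕ) < t <;> simp [pad, hj, H j]
  · intro H j hj
    have := congrFun H j
    simpa [pad, hj] using this

lemma agreeN_zero (y h : Fin n → Option X) : agreeN 0 y h := by
  intro j hj; exact absurd hj (Nat.not_lt_zero _)

lemma agreeN_self (t : ℕ) (h : Fin n → Option X) : agreeN t h h := fun _ _ => rfl

lemma agreeN_eq {t : ℕ} {h₁ h₂ : Fin n → Option X} (hag : agreeN t h₁ h₂)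
    (y : Fin n → Option X) : agreeN t y h₁ = agreeN t y h₂ := by
  apply propext
  constructor <;> intro H j hj
  · rw [← hag j hj]; exact H j hj
  · rw [hag j hj]; exact H j hj

lemma agreeN_n_iff (y h : Fin n → Option X) : agreeN n y h ↔ y = h := by
  constructor
  · intro H; funext j; exact H j j.isLt
  · rintro rfl; exact fun _ _ => rfl

lemma agreeN_succ {t : ℕ} (i : Fin n) (hi : (i : ℕ) = t) (y h : Fin n → Option X) :
    agreeN (t + 1) y h ↔ y i = h i ∧ agreeN t y h := by
  constructor
  · intro H
    exact ⟨H i (by omega), fun j hj => H j (by omega)⟩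
  · rintro ⟨H1, H2⟩ j hj
    rcases Nat.lt_or_ge (j : ℕ) t with hlt | hge
    · exact H2 j hlt
    · have : j = i := by apply Fin.ext; omega
      rw [this]; exact H1


variable {J : (Fin n → X) → (Fin n → Option X) → ℝ} {K : Finset (Fin n)}

lemma prXH_congr {t : ℕ} {h₁ h₂ : Fin n → Option X} (hag : agreeN t h₁ h₂)
    (x : Fin n → X) : prXH J t x h₁ = prXH J t x h₂ := by
  unfold prXH; exact Finset.sum_congr rfl fun y _ => by rw [agreeN_eq hag]

lemma prXHY_congr {t : ℕ} {h₁ h₂ : Fin n → Option X} (hag : agreeN t h₁ h₂)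
    (x : Fin n → X) (i : Fin n) (b : Option X) :
    prXHY J t x h₁ i b = prXHY J t x h₂ i b := by
  unfold prXHY; exact Finset.sum_congr rfl fun y _ => by rw [agreeN_eq hag]

lemma prKH_congr {t : ℕ} {h₁ h₂ : Fin n → Option X} (hag : agreeN t h₁ h₂)
    (u : ↥K → X) : prKH J K t u h₁ = prKH J K t u h₂ := by
  unfold prKH
  exact Finset.sum_congr rfl fun x _ => Finset.sum_congr rfl fun y _ => by rw [agreeN_eq hag]

lemma prIKH_congr {t : ℕ} {h₁ h₂ : Fin n → Option X} (hag : agreeN t h₁ h₂)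
    (i : Fin n) (a : X) (u : ↥K → X) : prIKH J K t i a u h₁ = prIKH J K t i a u h₂ := by
  unfold prIKH
  exact Finset.sum_congr rfl fun x _ => Finset.sum_congr rfl fun y _ => by rw [agreeN_eq hag]

lemma prYKH_congr {t : ℕ} {h₁ h₂ : Fin n → Option X} (hag : agreeN t h₁ h₂)
    (i : Fin n) (b : Option X) (u : ↥K → X) :
    prYKH J K t i b u h₁ = prYKH J K t i b u h₂ := by
  unfold prYKH
  exact Finset.sum_congr rfl fun x _ => Finset.sum_congr rfl fun y _ => by rw [agreeN_eq hag]

lemma condX_congr {t : ℕ} {h₁ h₂ : Fin n → Option X} (hag : agreeN t h₁ h₂)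
    (i : Fin n) (a : X) (u : ↥K → X) : condX J K t i a u h₁ = condX J K t i a u h₂ := by
  unfold condX; rw [prIKH_congr hag, prKH_congr hag]

set_option maxHeartbeats 1000000 in
lemma minC_congr {t : ℕ} {h₁ h₂ : Fin n → Option X} (hag : agreeN t h₁ h₂)
    (i : Fin n) (a : X) : minC J K t i a h₁ = minC J K t i a h₂ := by
  unfold minC
  simp only [prKH_congr hag, condX_congr hag]

/-- Sum-of-nonneg lemmas. -/
lemma prXH_nonneg (hJ0 : ∀ x y, 0 ≤ J x y) (t : ℕ) (x : Fin n → X) (h : Fin n → Option X) :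
    0 ≤ prXH J t x h :=
  Finset.sum_nonneg fun y _ => by split_ifs <;> [exact hJ0 x y; exact le_rfl]

lemma prXHY_nonneg (hJ0 : ∀ x y, 0 ≤ J x y) (t : ℕ) (x : Fin n → X) (h : Fin n → Option X)
    (i : Fin n) (b : Option X) : 0 ≤ prXHY J t x h i b :=
  Finset.sum_nonneg fun y _ => by split_ifs <;> [exact hJ0 x y; exact le_rfl]

lemma prKH_nonneg (hJ0 : ∀ x y, 0 ≤ J x y) (t : ℕ) (u : ↥K → X) (h : Fin n → Option X) :
    0 ≤ prKH J K t u h :=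
  Finset.sum_nonneg fun x _ => Finset.sum_nonneg fun y _ => by
    split_ifs <;> [exact hJ0 x y; exact le_rfl]

lemma prIKH_nonneg (hJ0 : ∀ x y, 0 ≤ J x y) (t : ℕ) (i : Fin n) (a : X) (u : ↥K → X)
    (h : Fin n → Option X) : 0 ≤ prIKH J K t i a u h :=
  Finset.sum_nonneg fun x _ => Finset.sum_nonneg fun y _ => by
    split_ifs <;> [exact hJ0 x y; exact le_rfl]

lemma prYKH_nonneg (hJ0 : ∀ x y, 0 ≤ J x y) (t : ℕ) (i : Fin n) (b : Option X) (u : ↥K → X)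
    (h : Fin n → Option X) : 0 ≤ prYKH J K t i b u h :=
  Finset.sum_nonneg fun x _ => Finset.sum_nonneg fun y _ => by
    split_ifs <;> [exact hJ0 x y; exact le_rfl]

lemma condX_nonneg (hJ0 : ∀ x y, 0 ≤ J x y) (t : ℕ) (i : Fin n) (a : X) (u : ↥K → X)
    (h : Fin n → Option X) : 0 ≤ condX J K t i a u h :=
  div_nonneg (prIKH_nonneg hJ0 t i a u h) (prKH_nonneg hJ0 t u h)

lemma minC_nonneg (hJ0 : ∀ x y, 0 ≤ J x y) (t : ℕ) (i : Fin n) (a : X)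
    (h : Fin n → Option X) : 0 ≤ minC J K t i a h := by
  unfold minC
  by_cases hS : {r : ℝ | ∃ u : ↥K → X, 0 < prKH J K t u h ∧ r = condX J K t i a u h}.Nonempty
  · apply le_csInf hS
    rintro r ⟨u, _, rfl⟩
    exact condX_nonneg hJ0 t i a u h
  · rw [Set.not_nonempty_iff_eq_empty] at hS
    rw [hS, Real.sInf_empty]

lemma minC_le (hJ0 : ∀ x y, 0 ≤ J x y) {t : ℕ} {i : Fin n} {a : X} {u : ↥K → X}
    {h : Fin n → Option X} (hu : 0 < prKH J K t u h) :
    minC J K t i a h ≤ condX J K t i a u h := by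
  apply csInf_le
  · exact ⟨0, fun r ⟨u', _, hr⟩ => hr ▸ condX_nonneg hJ0 t i a u' h⟩
  · exact ⟨u, hu, rfl⟩


lemma prXHY_le_prXH (hJ0 : ∀ x y, 0 ≤ J x y) (t : ℕ) (x : Fin n → X)
    (h : Fin n → Option X) (i : Fin n) (b : Option X) :
    prXHY J t x h i b ≤ prXH J t x h := by
  apply Finset.sum_le_sum
  intro y _
  split_ifs with h1 h2 h2
  · exact le_rfl
  · exact absurd h1.2 h2
  · exact hJ0 x y
  · exact le_rfl

lemma prIKH_le_prKH (hJ0 : ∀ x y, 0 ≤ J x y) (t : ℕ) (i : Fin n) (a : X) (u : ↥K → X)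
    (h : Fin n → Option X) : prIKH J K t i a u h ≤ prKH J K t u h := by
  apply Finset.sum_le_sum
  intro x _
  apply Finset.sum_le_sum
  intro y _
  split_ifs with h1 h2 h2
  · exact le_rfl
  · exact absurd h1.2 h2
  · exact hJ0 x y
  · exact le_rfl

lemma prIKH_eq_sum (t : ℕ) (i : Fin n) (a : X) (u : ↥K → X) (h : Fin n → Option X) :
    prIKH J K t i a u h
      = ∑ x : Fin n → X, if x i = a ∧ restr K x = u then prXH J t x h else 0 := by
  unfold prIKH prXH
  refine Finset.sum_congr rfl fun x _ => ?_
  by_cases hx : x i = a ∧ restr K x = u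
  · simp [hx.1, hx.2]
  · rw [if_neg hx]
    apply Finset.sum_eq_zero
    intro y _
    rw [if_neg]
    tauto

lemma prKH_eq_sum (t : ℕ) (u : ↥K → X) (h : Fin n → Option X) :
    prKH J K t u h = ∑ x : Fin n → X, if restr K x = u then prXH J t x h else 0 := by
  unfold prKH prXH
  refine Finset.sum_congr rfl fun x _ => ?_
  by_cases hx : restr K x = u
  · simp [hx]
  · rw [if_neg hx]
    apply Finset.sum_eq_zero
    intro y _
    rw [if_neg]
    tauto

lemma sum_prYKH_b (t : ℕ) (i : Fin n) (u : ↥K → X) (h : Fin n → Option X) :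
    ∑ b : Option X, prYKH J K t i b u h = prKH J K t u h := by
  unfold prYKH prKH
  rw [Finset.sum_comm]
  refine Finset.sum_congr rfl fun x _ => ?_
  rw [Finset.sum_comm]
  refine Finset.sum_congr rfl fun y _ => ?_
  by_cases hC : restr K x = u ∧ agreeN t y h
  · simp [hC.1, hC.2]
  · rw [if_neg hC]
    apply Finset.sum_eq_zero
    intro b _
    rw [if_neg]
    tauto

lemma sum_prKH_u (t : ℕ) (h : Fin n → Option X) :
    ∑ u : ↥K → X, prKH J K t u h = prH J t h := by
  unfold prKH prH prXH
  rw [Finset.sum_comm]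
  refine Finset.sum_congr rfl fun x _ => ?_
  rw [Finset.sum_comm]
  refine Finset.sum_congr rfl fun y _ => ?_
  by_cases hC : agreeN t y h
  · simp [hC]
  · rw [if_neg hC]
    apply Finset.sum_eq_zero
    intro u _
    rw [if_neg]
    tauto

lemma sum_prYKH_u (t : ℕ) (i : Fin n) (b : Option X) (h : Fin n → Option X) :
    ∑ u : ↥K → X, prYKH J K t i b u h = ∑ x : Fin n → X, prXHY J t x h i b := by
  unfold prYKH prXHY
  rw [Finset.sum_comm]
  refine Finset.sum_congr rfl fun x _ => ?_
  rw [Finset.sum_comm]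
  refine Finset.sum_congr rfl fun y _ => ?_
  by_cases hC : y i = b ∧ agreeN t y h
  · simp [hC.1, hC.2]
  · rw [if_neg (by tauto : ¬(y i = b ∧ agreeN t y h))]
    apply Finset.sum_eq_zero
    intro u _
    rw [if_neg]
    tauto


/-! ### Mechanism-dependent lemmas -/

variable {p : (Fin n → X) → ℝ}

lemma prXHY_mech (hJ : IsSequentialMechanism p K J) (i : Fin n) (x : Fin n → X)
    (h : Fin n → Option X) :
    prXHY J (i : ℕ) x h i (some (x i))
      = (minC J K (i : ℕ) i (x i) h / condX J K (i : ℕ) i (x i) (restr K x) h)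
          * prXH J (i : ℕ) x h := by
  obtain ⟨hJ0, -, -, hmech⟩ := hJ
  rcases lt_or_eq_of_le (prXH_nonneg hJ0 (i : ℕ) x h) with hpos | hzero
  · exact hmech i x h hpos
  · have h1 : prXH J (i : ℕ) x h = 0 := hzero.symm
    have h2 : prXHY J (i : ℕ) x h i (some (x i)) = 0 :=
      le_antisymm (h1 ▸ prXHY_le_prXH hJ0 _ x h i _) (prXHY_nonneg hJ0 _ x h i _)
    rw [h1, h2, mul_zero]

lemma prYKH_some (hJ : IsSequentialMechanism p K J) (i : Fin n) (a : X) (u : ↥K → X)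
    (h : Fin n → Option X) :
    prYKH J K (i : ℕ) i (some a) u h
      = (minC J K (i : ℕ) i a h / condX J K (i : ℕ) i a u h)
          * prIKH J K (i : ℕ) i a u h := by
  obtain ⟨hJ0, -, hfaith, -⟩ := id hJ
  have key : prYKH J K (i : ℕ) i (some a) u h
      = ∑ x : Fin n → X,
          if x i = a ∧ restr K x = u then prXHY J (i : ℕ) x h i (some (x i)) else 0 := by
    unfold prYKH prXHY
    refine Finset.sum_congr rfl fun x _ => ?_
    by_cases hx : x i = a ∧ restr K x = u
    · rw [if_pos hx, hx.1]
      refine Finset.sum_congr rfl fun y _ => ?_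
      simp [hx.2]
    · rw [if_neg hx]
      apply Finset.sum_eq_zero
      intro y _
      by_cases hgood : y i = some a ∧ restr K x = u ∧ agreeN (i : ℕ) y h
      · rw [if_pos hgood]
        by_contra hne
        have hpos : 0 < J x y := lt_of_le_of_ne (hJ0 x y) (Ne.symm hne)
        rcases hfaith x y hpos i with hy | hy
        · rw [hgood.1] at hy
          exact hx ⟨(Option.some.inj hy).symm, hgood.2.1⟩
        · rw [hgood.1] at hy
          exact absurd hy (Option.some_ne_none a)
      · rw [if_neg hgood]
  rw [key, prIKH_eq_sum, Finset.mul_sum]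
  refine Finset.sum_congr rfl fun x _ => ?_
  by_cases hx : x i = a ∧ restr K x = u
  · rw [if_pos hx, if_pos hx, prXHY_mech hJ i x h, hx.1, hx.2]
  · rw [if_neg hx, if_neg hx, mul_zero]

lemma prYKH_some_eq (hJ : IsSequentialMechanism p K J) (i : Fin n) (a : X) (u : ↥K → X)
    (h : Fin n → Option X) :
    prYKH J K (i : ℕ) i (some a) u h
      = minC J K (i : ℕ) i a h * prKH J K (i : ℕ) u h := by
  obtain ⟨hJ0, -, -, -⟩ := id hJ
  rw [prYKH_some hJ i a u h]
  rcases lt_or_eq_of_le (prKH_nonneg hJ0 (i : ℕ) u h) with hK | hK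
  · rcases lt_or_eq_of_le (prIKH_nonneg hJ0 (i : ℕ) i a u h) with hI | hI
    · have hc : condX J K (i : ℕ) i a u h
          = prIKH J K (i : ℕ) i a u h / prKH J K (i : ℕ) u h := rfl
      rw [hc]
      field_simp
    · have hI' : prIKH J K (i : ℕ) i a u h = 0 := hI.symm
      have hc0 : condX J K (i : ℕ) i a u h = 0 := by rw [condX, hI', zero_div]
      have hm0 : minC J K (i : ℕ) i a h = 0 :=
        le_antisymm (hc0 ▸ minC_le hJ0 hK) (minC_nonneg hJ0 _ i a h)
      rw [hI', hm0, mul_zero, zero_mul]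
  · have hK' : prKH J K (i : ℕ) u h = 0 := hK.symm
    have hI' : prIKH J K (i : ℕ) i a u h = 0 :=
      le_antisymm (hK' ▸ prIKH_le_prKH hJ0 _ i a u h) (prIKH_nonneg hJ0 _ i a u h)
    rw [hI', hK', mul_zero, mul_zero]

lemma prYKH_none_eq (hJ : IsSequentialMechanism p K J) (i : Fin n) (u : ↥K → X)
    (h : Fin n → Option X) :
    prYKH J K (i : ℕ) i none u h
      = (1 - ∑ a : X, minC J K (i : ℕ) i a h) * prKH J K (i : ℕ) u h := by
  have hsum := sum_prYKH_b (J := J) (K := K) (i : ℕ) i u h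
  rw [Fintype.sum_option] at hsum
  have hs : ∑ a : X, prYKH J K (i : ℕ) i (some a) u h
      = (∑ a : X, minC J K (i : ℕ) i a h) * prKH J K (i : ℕ) u h := by
    rw [Finset.sum_mul]
    exact Finset.sum_congr rfl fun a _ => prYKH_some_eq hJ i a u h
  rw [sub_mul, one_mul]
  linarith


lemma prXH_zero (x : Fin n → X) (h : Fin n → Option X) :
    prXH J 0 x h = ∑ y : Fin n → Option X, J x y := by
  unfold prXH
  exact Finset.sum_congr rfl fun y _ => if_pos (agreeN_zero y h)

lemma prXH_n (x : Fin n → X) (y : Fin n → Option X) : prXH J n x y = J x y := by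
  unfold prXH
  rw [Finset.sum_eq_single_of_mem y (Finset.mem_univ y)]
  · exact if_pos (agreeN_self n y)
  · intro y' _ hne
    exact if_neg fun hag => hne ((agreeN_n_iff y' y).mp hag)

lemma prH_n (y : Fin n → Option X) :
    prH J n y = ∑ x : Fin n → X, J x y :=
  Finset.sum_congr rfl fun x _ => prXH_n x y

lemma prKH_n (u : ↥K → X) (y : Fin n → Option X) :
    prKH J K n u y = ∑ x : Fin n → X, if restr K x = u then J x y else 0 := by
  rw [prKH_eq_sum]
  exact Finset.sum_congr rfl fun x _ => by rw [prXH_n]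

lemma prKH_succ {t : ℕ} (i : Fin n) (hi : (i : ℕ) = t) (u : ↥K → X)
    (h : Fin n → Option X) :
    prKH J K (t + 1) u h = prYKH J K t i (h i) u h := by
  unfold prKH prYKH
  refine Finset.sum_congr rfl fun x _ => Finset.sum_congr rfl fun y _ => ?_
  simp only [agreeN_succ i hi, and_left_comm]

lemma sum_restr_indicator (p : (Fin n → X) → ℝ) (hp1 : ∑ x : Fin n → X, p x = 1) :
    ∑ v : ↥K → X, (∑ x : Fin n → X, if restr K x = v then p x else 0) = 1 := by
  rw [Finset.sum_comm, ← hp1]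
  refine Finset.sum_congr rfl fun x _ => ?_
  simp

lemma privacy_ind (hJ : IsSequentialMechanism p K J)
    (hp1 : ∑ x : Fin n → X, p x = 1) :
    ∀ t, t ≤ n → ∀ (u : ↥K → X) (h : Fin n → Option X),
      prKH J K t u h
        = (∑ x : Fin n → X, if restr K x = u then p x else 0) * prH J t h := by
  obtain ⟨hJ0, hJp, -, -⟩ := id hJ
  intro t
  induction t with
  | zero =>
    intro _ u h
    have h1 : prKH J K 0 u h
        = ∑ x : Fin n → X, if restr K x = u then p x else 0 := by
      rw [prKH_eq_sum]
      refine Finset.sum_congr rfl fun x _ => ?_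
      rw [prXH_zero, hJp x]
    have h2 : prH J 0 h = 1 := by
      unfold prH
      rw [← hp1]
      refine Finset.sum_congr rfl fun x _ => ?_
      rw [prXH_zero, hJp x]
    rw [h1, h2, mul_one]
  | succ t ih =>
    intro ht u h
    have htn : t < n := lt_of_lt_of_le (Nat.lt_succ_self t) ht
    set i : Fin n := ⟨t, htn⟩ with hidef
    have hstep : ∀ v : ↥K → X, prKH J K (t + 1) v h = prYKH J K t i (h i) v h :=
      fun v => prKH_succ i rfl v h
    obtain ⟨c, hc⟩ : ∃ c : ℝ, ∀ v : ↥K → X,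
        prYKH J K t i (h i) v h = c * prKH J K t v h := by
      cases hhi : h i with
      | none =>
        exact ⟨1 - ∑ a : X, minC J K t i a h,
          fun v => by have := prYKH_none_eq hJ i v h; exact this⟩
      | some a =>
        exact ⟨minC J K t i a h, fun v => by have := prYKH_some_eq hJ i a v h; exact this⟩
    have hq1 := sum_restr_indicator (K := K) p hp1
    have hH : prH J (t + 1) h = c * prH J t h := by
      rw [← sum_prKH_u (J := J) (K := K) (t + 1) h]
      have hv : ∀ v : ↥K → X, prKH J K (t + 1) v h
          = (c * prH J t h) * (∑ x : Fin n → X, if restr K x = v then p x else 0) := by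
        intro v
        rw [hstep v, hc v, ih (le_of_lt htn) v h]
        ring
      rw [Finset.sum_congr rfl fun v _ => hv v, ← Finset.mul_sum, hq1, mul_one]
    rw [hstep u, hc u, ih (le_of_lt htn) u h, hH]
    ring


lemma fib_decomp (t : ℕ) (F : (Fin n → Option X) → ℝ) :
    ∑ y : Fin n → Option X, F y
      = ∑ h : Fin n → Option X, ∑ y : Fin n → Option X,
          (if pad t y = h then F y else 0) := by
  rw [Finset.sum_comm]
  refine Finset.sum_congr rfl fun y _ => ?_
  simp [Finset.sum_ite_eq]

lemma prH_marg (t : ℕ) (h : Fin n → Option X) :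
    prH J t h = ∑ y : Fin n → Option X,
      (if agreeN t y h then (∑ x : Fin n → X, J x y) else 0) := by
  unfold prH prXH
  rw [Finset.sum_comm]
  refine Finset.sum_congr rfl fun y _ => ?_
  by_cases hc : agreeN t y h <;> simp [hc]

lemma rate_key (hJ : IsSequentialMechanism p K J) (i : Fin n) (a : X) :
    ∑ x : Fin n → X, ∑ y : Fin n → Option X, (if y i = some a then J x y else 0)
      = ∑ x : Fin n → X, ∑ y : Fin n → Option X, J x y * minC J K (i : ℕ) i a y := by
  set t := (i : ℕ) with htdef
  have hper : ∀ h : Fin n → Option X,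
      ∑ y : Fin n → Option X,
        (if pad t y = h then (if y i = some a then (∑ x : Fin n → X, J x y) else 0) else 0)
      = ∑ y : Fin n → Option X,
        (if pad t y = h then (∑ x : Fin n → X, J x y) * minC J K t i a y else 0) := by
    intro h
    by_cases hfix : pad t h = h
    · have hiff : ∀ y : Fin n → Option X, (pad t y = h) = agreeN t y h := fun y =>
        propext (by rw [agreeN_iff_pad t y h, hfix])
      simp only [hiff]
      have hL : ∑ y : Fin n → Option X,
          (if agreeN t y h then (if y i = some a then (∑ x : Fin n → X, J x y) else 0) else 0)
          = minC J K t i a h * prH J t h := by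
        have e1 : ∀ y : Fin n → Option X,
            (if agreeN t y h then (if y i = some a then (∑ x : Fin n → X, J x y) else 0) else 0)
            = (if y i = some a ∧ agreeN t y h then (∑ x : Fin n → X, J x y) else 0) := by
          intro y
          by_cases h1 : agreeN t y h <;> by_cases h2 : y i = some a <;> simp [h1, h2]
        rw [Finset.sum_congr rfl fun y _ => e1 y]
        have e2 : ∑ y : Fin n → Option X,
            (if y i = some a ∧ agreeN t y h then (∑ x : Fin n → X, J x y) else 0)
            = ∑ x : Fin n → X, prXHY J t x h i (some a) := by
          unfold prXHY
          rw [Finset.sum_comm]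
          refine Finset.sum_congr rfl fun y _ => ?_
          by_cases hc : y i = some a ∧ agreeN t y h <;> simp [hc]
        rw [e2, ← sum_prYKH_u t i (some a) h,
          Finset.sum_congr rfl fun u _ => prYKH_some_eq hJ i a u h,
          ← Finset.mul_sum, sum_prKH_u]
      have hR : ∑ y : Fin n → Option X,
          (if agreeN t y h then (∑ x : Fin n → X, J x y) * minC J K t i a y else 0)
          = minC J K t i a h * prH J t h := by
        have e3 : ∀ y : Fin n → Option X,
            (if agreeN t y h then (∑ x : Fin n → X, J x y) * minC J K t i a y else 0)
            = minC J K t i a h * (if agreeN t y h then (∑ x : Fin n → X, J x y) else 0) := by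
          intro y
          by_cases h1 : agreeN t y h
          · rw [if_pos h1, if_pos h1, minC_congr h1 i a, mul_comm]
          · simp [h1]
        rw [Finset.sum_congr rfl fun y _ => e3 y, ← Finset.mul_sum, ← prH_marg]
      rw [hL, hR]
    · refine Finset.sum_congr rfl fun y _ => ?_
      have hne : pad t y ≠ h := fun hyp => hfix (by rw [← hyp, pad_pad])
      rw [if_neg hne, if_neg hne]
  calc ∑ x : Fin n → X, ∑ y : Fin n → Option X, (if y i = some a then J x y else 0)
      = ∑ y : Fin n → Option X, (if y i = some a then (∑ x : Fin n → X, J x y) else 0) := by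
        rw [Finset.sum_comm]
        refine Finset.sum_congr rfl fun y _ => ?_
        by_cases hc : y i = some a <;> simp [hc]
    _ = ∑ h : Fin n → Option X, ∑ y : Fin n → Option X,
          (if pad t y = h then (if y i = some a then (∑ x : Fin n → X, J x y) else 0) else 0) :=
        fib_decomp t _
    _ = ∑ h : Fin n → Option X, ∑ y : Fin n → Option X,
          (if pad t y = h then (∑ x : Fin n → X, J x y) * minC J K t i a y else 0) :=
        Finset.sum_congr rfl fun h _ => hper h
    _ = ∑ y : Fin n → Option X, (∑ x : Fin n → X, J x y) * minC J K t i a y :=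
        (fib_decomp t _).symm
    _ = ∑ x : Fin n → X, ∑ y : Fin n → Option X, J x y * minC J K t i a y := by
        rw [Finset.sum_comm]
        exact Finset.sum_congr rfl fun y _ => Finset.sum_mul _ _ _

lemma sum_b_total (hJ : IsSequentialMechanism p K J)
    (hp1 : ∑ x : Fin n → X, p x = 1) (i : Fin n) :
    (∑ x : Fin n → X, ∑ y : Fin n → Option X, if y i = none then J x y else 0)
      + ∑ a : X, (∑ x : Fin n → X, ∑ y : Fin n → Option X,
          if y i = some a then J x y else 0) = 1 := by
  obtain ⟨-, hJp, -, -⟩ := id hJ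
  have h : ∑ b : Option X, (∑ x : Fin n → X, ∑ y : Fin n → Option X,
      if y i = b then J x y else 0) = 1 := by
    rw [← hp1, Finset.sum_comm]
    refine Finset.sum_congr rfl fun x _ => ?_
    rw [← hJp x, Finset.sum_comm]
    refine Finset.sum_congr rfl fun y _ => ?_
    simp [Finset.sum_ite_eq]
  rw [Fintype.sum_option] at h
  exact h

end Aux

/-- the sequential privacy mechanism is faithful and private, and its rate
satisfies `1 - (1/n) ∑_i P(Y_i = ∗) = (1/n) ∑_i ∑_a E_{Y_{[i-1]}}[ min_u P(X_i = a | X_K =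
u, Y_{[i-1]}) ]` (the expectation over positive-probability histories being written as a
`J`-weighted sum, since `minC` depends on `y` only through its first `i` coordinates).
Consequently, every rate `R` not exceeding this quantity is achievable by a faithful
private mechanism. -/
theorem sequentialMechanism_rate {n : ℕ} (hn : 1 ≤ n) (hX : 2 ≤ Fintype.card X)
    (p : (Fin n → X) → ℝ) (hp0 : ∀ x, 0 ≤ p x) (hp1 : ∑ x : Fin n → X, p x = 1)
    (K : Finset (Fin n))
    (J : (Fin n → X) → (Fin n → Option X) → ℝ)
    (hJ : IsSequentialMechanism p K J) :
    -- faithfulness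
    (∀ x y, 0 < J x y → ∀ i : Fin n, y i = some (x i) ∨ y i = none) ∧
    -- privacy: the joint law of (X_K, Y) factorizes
    (∀ (u : ↥K → X) (y : Fin n → Option X),
      (∑ x : Fin n → X, if restr K x = u then J x y else 0)
        = (∑ x : Fin n → X, if restr K x = u then p x else 0)
            * (∑ x : Fin n → X, J x y)) ∧
    -- the rate identity
    (1 - (1 / (n : ℝ)) * ∑ i : Fin n,
        (∑ x : Fin n → X, ∑ y : Fin n → Option X, if y i = none then J x y else 0)
      = (1 / (n : ℝ)) * ∑ i : Fin n, ∑ a : X,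
          ∑ x : Fin n → X, ∑ y : Fin n → Option X, J x y * minC J K (i : ℕ) i a y) ∧
    -- consequently every rate below this quantity is achievable
    (∀ R : ℝ,
      R ≤ (1 / (n : ℝ)) * ∑ i : Fin n, ∑ a : X,
            ∑ x : Fin n → X, ∑ y : Fin n → Option X, J x y * minC J K (i : ℕ) i a y →
      ∃ w : (Fin n → X) → (Fin n → Option X) → ℝ,
        (∀ x y, 0 ≤ w x y) ∧ (∀ x, ∑ y : Fin n → Option X, w x y = 1) ∧
        (∀ x y, 0 < w x y → ∀ i : Fin n, y i = some (x i) ∨ y i = none) ∧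
        (∀ (u : ↥K → X) (y : Fin n → Option X),
          (∑ x : Fin n → X, if restr K x = u then p x * w x y else 0)
            = (∑ x : Fin n → X, if restr K x = u then p x else 0)
                * ∑ x : Fin n → X, p x * w x y) ∧
        R ≤ 1 - (1 / (n : ℝ)) *
              ∑ x : Fin n → X, ∑ y : Fin n → Option X,
                p x * w x y * (numErasures y : ℝ)) := by

  obtain ⟨hJ0, hJp, hfaith, hmech⟩ := id hJ
  have hn' : (n : ℝ) ≠ 0 := Nat.cast_ne_zero.mpr (by omega)
  have hpriv : ∀ (u : ↥K → X) (y : Fin n → Option X),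
      (∑ x : Fin n → X, if restr K x = u then J x y else 0)
        = (∑ x : Fin n → X, if restr K x = u then p x else 0)
            * (∑ x : Fin n → X, J x y) := by
    intro u y
    have h := privacy_ind hJ hp1 n le_rfl u y
    rwa [prKH_n, prH_n] at h
  have hrate : 1 - (1 / (n : ℝ)) * ∑ i : Fin n,
        (∑ x : Fin n → X, ∑ y : Fin n → Option X, if y i = none then J x y else 0)
      = (1 / (n : ℝ)) * ∑ i : Fin n, ∑ a : X,
          ∑ x : Fin n → X, ∑ y : Fin n → Option X, J x y * minC J K (i : ℕ) i a y := by
    have e : ∀ i : Fin n,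
        (∑ x : Fin n → X, ∑ y : Fin n → Option X, if y i = none then J x y else 0)
        = 1 - ∑ a : X, ∑ x : Fin n → X, ∑ y : Fin n → Option X,
            J x y * minC J K (i : ℕ) i a y := by
      intro i
      have h1 := sum_b_total hJ hp1 i
      have h2 : ∑ a : X, (∑ x : Fin n → X, ∑ y : Fin n → Option X,
            if y i = some a then J x y else 0)
          = ∑ a : X, ∑ x : Fin n → X, ∑ y : Fin n → Option X,
            J x y * minC J K (i : ℕ) i a y :=
        Finset.sum_congr rfl fun a _ => rate_key hJ i a
      rw [h2] at h1
      linarith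
    rw [Finset.sum_congr rfl fun i _ => e i, Finset.sum_sub_distrib, Finset.sum_const,
      Finset.card_univ, Fintype.card_fin, nsmul_eq_mul, mul_one]
    field_simp
    ring
  refine ⟨hfaith, hpriv, hrate, ?_⟩
  intro R hR
  have hJzero : ∀ x, p x = 0 → ∀ y, J x y = 0 := by
    intro x hx y
    have hsum : ∑ y' : Fin n → Option X, J x y' = 0 := by rw [hJp x, hx]
    exact (Finset.sum_eq_zero_iff_of_nonneg (fun y' _ => hJ0 x y')).mp hsum y
      (Finset.mem_univ y)
  set w : (Fin n → X) → (Fin n → Option X) → ℝ :=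
    fun x y => if p x = 0 then (if y = (fun _ => none) then 1 else 0) else J x y / p x
    with hw
  have hpw : ∀ x y, p x * w x y = J x y := by
    intro x y
    by_cases hx : p x = 0
    · simp [hw, hx, hJzero x hx y]
    · rw [hw]
      simp only [if_neg hx]
      field_simp
  refine ⟨w, ?_, ?_, ?_, ?_, ?_⟩
  · intro x y
    by_cases hx : p x = 0
    · simp only [hw, if_pos hx]
      split_ifs <;> norm_num
    · simp only [hw, if_neg hx]
      exact div_nonneg (hJ0 x y) (hp0 x)
  · intro x
    by_cases hx : p x = 0
    · simp [hw, hx]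
    · simp only [hw, if_neg hx]
      rw [← Finset.sum_div, hJp x, div_self hx]
  · intro x y hwpos i
    by_cases hx : p x = 0
    · have hy : y = (fun _ => none) := by
        by_contra hne
        simp [hw, hx, hne] at hwpos
      right
      rw [hy]
    · have hJpos : 0 < J x y := by
        have h1 : 0 < J x y / p x := by simpa [hw, hx] using hwpos
        have hppos : 0 < p x := lt_of_le_of_ne (hp0 x) (Ne.symm hx)
        have h2 := mul_pos h1 hppos
        rwa [div_mul_cancel₀ _ hx] at h2
      exact hfaith x y hJpos i
  · intro u y
    rw [Finset.sum_congr rfl fun x _ =>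
        (by rw [hpw] : (if restr K x = u then p x * w x y else 0)
          = (if restr K x = u then J x y else 0)),
      show (∑ x : Fin n → X, p x * w x y) = ∑ x : Fin n → X, J x y from
        Finset.sum_congr rfl fun x _ => hpw x y]
    exact hpriv u y
  · have hrw : ∑ x : Fin n → X, ∑ y : Fin n → Option X,
        p x * w x y * (numErasures y : ℝ)
        = ∑ x : Fin n → X, ∑ y : Fin n → Option X, J x y * (numErasures y : ℝ) :=
      Finset.sum_congr rfl fun x _ => Finset.sum_congr rfl fun y _ => by rw [hpw]
    have hnum : ∑ x : Fin n → X, ∑ y : Fin n → Option X, J x y * (numErasures y : ℝ)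
        = ∑ i : Fin n, ∑ x : Fin n → X, ∑ y : Fin n → Option X,
            (if y i = none then J x y else 0) := by
      conv_rhs => rw [Finset.sum_comm]
      refine Finset.sum_congr rfl fun x _ => ?_
      conv_rhs => rw [Finset.sum_comm]
      refine Finset.sum_congr rfl fun y _ => ?_
      rw [numErasures, Finset.card_filter]
      push_cast
      rw [Finset.mul_sum]
      exact Finset.sum_congr rfl fun j _ => by by_cases hb : y j = none <;> simp [hb]
    rw [hrw, hnum]
    linarith [hrate, hR]

end GenotypeHiding
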